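/- There exists δ > 0 such that, defining k_t := δ/(1+t)⁴ for t ≥ 0 and K_t := k_t + ∫_t^∞ s k_s ds, one has: (i) for all real numbers 0 ≤ t ≤ s', ∫_t^{s'} K_{s−t} K_{s'−s} ds ≤ K_{s'−t}; and (ii) ∫₀^∞ K_s ds ≤ 1. -/

import Mathlib

open MeasureTheory

/-- `k_t := δ / (1+t)^4`. -/
noncomputable def kf (δ t : ℝ) : ℝ := δ / (1 + t) ^ 4

/-- `K_t := k_t + ∫_t^∞ s k_s ds`. -/
noncomputable def Kf (δ t : ℝ) : ℝ := kf δ t + ∫ s in Set.Ioi t, s * kf δ s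

/-- Closed form for `Kf` on the nonnegative half line. -/
noncomputable def Pf (δ t : ℝ) : ℝ :=
  δ * (1/(1+t)^4 + 1/(2*(1+t)^2) - 1/(3*(1+t)^3))

lemma hasDerivAt_one_add (x : ℝ) : HasDerivAt (fun s : ℝ => 1 + s) 1 x := by
  simpa using (hasDerivAt_id x).const_add (1:ℝ)

lemma hdA (δ x : ℝ) (hx : (0:ℝ) < 1 + x) :
    HasDerivAt (fun s : ℝ => δ/3 * ((1+s)^3)⁻¹ - δ/2 * ((1+s)^2)⁻¹) (x * kf δ x) x := by
  have h1 := hasDerivAt_one_add x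
  have h3 : HasDerivAt (fun s : ℝ => (1+s)^3) (3*(1+x)^2) x := by
    simpa using h1.fun_pow 3
  have h2 : HasDerivAt (fun s : ℝ => (1+s)^2) (2*(1+x)) x := by
    simpa using h1.fun_pow 2
  have h3i := (h3.fun_inv (by positivity)).const_mul (δ/3)
  have h2i := (h2.fun_inv (by positivity)).const_mul (δ/2)
  have := h3i.fun_sub h2i
  refine this.congr_deriv ?_
  unfold kf
  field_simp
  ring

lemma inner_int (δ t : ℝ) (hδ : 0 ≤ δ) (ht : 0 ≤ t) :
    (∫ s in Set.Ioi t, s * kf δ s) = δ/2 * ((1+t)^2)⁻¹ - δ/3 * ((1+t)^3)⁻¹ := by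
  have key := integral_Ioi_of_hasDerivAt_of_nonneg' (g := fun s : ℝ =>
      δ/3 * ((1+s)^3)⁻¹ - δ/2 * ((1+s)^2)⁻¹) (g' := fun s : ℝ => s * kf δ s)
      (a := t) (l := 0) ?_ ?_ ?_
  · rw [key]; ring
  · intro x hx
    have hx' : (0:ℝ) < 1 + x := by have := hx.out; linarith
    exact hdA δ x hx'
  · intro x hx
    have hx' : (0:ℝ) < x := lt_of_le_of_lt ht hx.out
    have : 0 ≤ kf δ x := by unfold kf; positivity
    positivity
  · have hpow : ∀ n : ℕ, n ≠ 0 → Filter.Tendsto (fun s : ℝ => ((1+s)^n)⁻¹)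
        Filter.atTop (nhds 0) := by
      intro n hn
      apply Filter.Tendsto.inv_tendsto_atTop
      exact (Filter.tendsto_pow_atTop hn).comp
        (Filter.tendsto_atTop_add_const_left _ 1 Filter.tendsto_id)
    have := ((hpow 3 (by norm_num)).const_mul (δ/3)).sub ((hpow 2 (by norm_num)).const_mul (δ/2))
    simpa using this

lemma Kf_eq (δ t : ℝ) (hδ : 0 ≤ δ) (ht : 0 ≤ t) : Kf δ t = Pf δ t := by
  unfold Kf
  rw [inner_int δ t hδ ht]
  unfold Pf kf
  have h : (0:ℝ) < 1 + t := by linarith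
  field_simp
  ring

lemma Pf_upper (δ u : ℝ) (hδ : 0 ≤ δ) (hu : 0 ≤ u) :
    Pf δ u ≤ (3*δ/2) / (1+u)^2 := by
  have ha : (1:ℝ) ≤ 1 + u := by linarith
  have ha0 : (0:ℝ) < 1 + u := by linarith
  rw [← sub_nonneg]
  have e : (3*δ/2) / (1+u)^2 - Pf δ u
      = δ * ((1+u)^2 - 1 + (1+u)/3) / (1+u)^4 := by
    unfold Pf; field_simp; ring
  rw [e]
  have h1 : (0:ℝ) ≤ (1+u)^2 - 1 + (1+u)/3 := by nlinarith
  positivity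

lemma Pf_lower (δ u : ℝ) (hδ : 0 ≤ δ) (hu : 0 ≤ u) :
    (δ/6) / (1+u)^2 ≤ Pf δ u := by
  have ha : (1:ℝ) ≤ 1 + u := by linarith
  have ha0 : (0:ℝ) < 1 + u := by linarith
  rw [← sub_nonneg]
  have e : Pf δ u - (δ/6) / (1+u)^2
      = δ * (1 + (1+u)^2/3 - (1+u)/3) / (1+u)^4 := by
    unfold Pf; field_simp; ring
  rw [e]
  have h1 : (0:ℝ) ≤ 1 + (1+u)^2/3 - (1+u)/3 := by nlinarith
  positivity

lemma Pf_nonneg (δ u : ℝ) (hδ : 0 ≤ δ) (hu : 0 ≤ u) : 0 ≤ Pf δ u := by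
  have := Pf_lower δ u hδ hu
  have ha0 : (0:ℝ) < 1 + u := by linarith
  have : (0:ℝ) ≤ (δ/6) / (1+u)^2 := by positivity
  linarith [Pf_lower δ u hδ hu]

lemma keyineq (a b : ℝ) (ha : 1 ≤ a) (hb : 1 ≤ b) :
    1/(a^2*b^2) ≤ 4/((a+b-1)^2) * (1/a^2 + 1/b^2) := by
  have ha0 : (0:ℝ) < a := by linarith
  have hb0 : (0:ℝ) < b := by linarith
  have hc0 : (0:ℝ) < a + b - 1 := by linarith
  rw [← sub_nonneg]
  have e : 4/((a+b-1)^2) * (1/a^2 + 1/b^2) - 1/(a^2*b^2)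
      = (4*(b^2+a^2) - (a+b-1)^2) / ((a+b-1)^2 * a^2 * b^2) := by
    field_simp
  rw [e]
  have h1 : (0:ℝ) ≤ 4*(b^2+a^2) - (a+b-1)^2 := by nlinarith [sq_nonneg (a-b)]
  positivity

lemma pointwise (δ u v : ℝ) (hδ : 0 ≤ δ) (hu : 0 ≤ u) (hv : 0 ≤ v) :
    Pf δ u * Pf δ v ≤ 9*δ^2/(1+u+v)^2 * (1/(1+u)^2 + 1/(1+v)^2) := by
  have ha0 : (0:ℝ) < 1 + u := by linarith
  have hb0 : (0:ℝ) < 1 + v := by linarith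
  calc Pf δ u * Pf δ v
      ≤ ((3*δ/2)/(1+u)^2) * ((3*δ/2)/(1+v)^2) := by
        apply mul_le_mul (Pf_upper δ u hδ hu) (Pf_upper δ v hδ hv)
          (Pf_nonneg δ v hδ hv) (by positivity)
    _ = (9*δ^2/4) * (1/((1+u)^2*(1+v)^2)) := by
        rw [div_mul_div_comm, mul_one_div]
        congr 1
        ring
    _ ≤ (9*δ^2/4) * (4/((1+u+v))^2 * (1/(1+u)^2 + 1/(1+v)^2)) := by
        apply mul_le_mul_of_nonneg_left ?_ (by positivity)
        have h := keyineq (1+u) (1+v) (by linarith) (by linarith)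
        have e : (1+u)+(1+v)-1 = 1+u+v := by ring
        rwa [e] at h
    _ = 9*δ^2/(1+u+v)^2 * (1/(1+u)^2 + 1/(1+v)^2) := by ring

lemma intA (t s' : ℝ) (h : t ≤ s') :
    (∫ s in t..s', 1/(1+s-t)^2) = 1 - 1/(1+s'-t) := by
  have key : ∀ x ∈ Set.uIcc t s', HasDerivAt (fun s : ℝ => -(1+s-t)⁻¹) (1/(1+x-t)^2) x := by
    intro x hx
    rw [Set.uIcc_of_le h] at hx
    have hx0 : (0:ℝ) < 1 + x - t := by have := hx.1; linarith
    have h1 : HasDerivAt (fun s : ℝ => 1 + s - t) 1 x := by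
      simpa using ((hasDerivAt_id x).const_add (1:ℝ)).sub_const t
    have := (h1.fun_inv (by positivity)).fun_neg
    refine this.congr_deriv ?_
    field_simp
  rw [intervalIntegral.integral_eq_sub_of_hasDerivAt key]
  · have hx0 : (0:ℝ) < 1 + s' - t := by linarith
    field_simp
    ring
  · apply ContinuousOn.intervalIntegrable
    intro x hx
    rw [Set.uIcc_of_le h] at hx
    have hx0 : (0:ℝ) < 1 + x - t := by have := hx.1; linarith
    apply ContinuousAt.continuousWithinAt
    exact ContinuousAt.div continuousAt_const (by fun_prop) (by positivity)

lemma intB (t s' : ℝ) (h : t ≤ s') :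
    (∫ s in t..s', 1/(1+s'-s)^2) = 1 - 1/(1+s'-t) := by
  have key : ∀ x ∈ Set.uIcc t s', HasDerivAt (fun s : ℝ => (1+s'-s)⁻¹) (1/(1+s'-x)^2) x := by
    intro x hx
    rw [Set.uIcc_of_le h] at hx
    have hx0 : (0:ℝ) < 1 + s' - x := by have := hx.2; linarith
    have h1 : HasDerivAt (fun s : ℝ => 1 + s' - s) (-1) x := by
      simpa using (hasDerivAt_id x).const_sub (1+s')
    have := h1.fun_inv (by positivity)
    refine this.congr_deriv ?_
    field_simp
  rw [intervalIntegral.integral_eq_sub_of_hasDerivAt key]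
  · have hx0 : (0:ℝ) < 1 + s' - t := by linarith
    field_simp
    ring
  · apply ContinuousOn.intervalIntegrable
    intro x hx
    rw [Set.uIcc_of_le h] at hx
    have hx0 : (0:ℝ) < 1 + s' - x := by have := hx.2; linarith
    apply ContinuousAt.continuousWithinAt
    exact ContinuousAt.div continuousAt_const (by fun_prop) (by positivity)

lemma tendsto_inv_pow_one_add (n : ℕ) (hn : n ≠ 0) :
    Filter.Tendsto (fun s : ℝ => ((1+s)^n)⁻¹) Filter.atTop (nhds 0) := by
  apply Filter.Tendsto.inv_tendsto_atTop
  exact (Filter.tendsto_pow_atTop hn).comp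
    (Filter.tendsto_atTop_add_const_left _ 1 Filter.tendsto_id)

lemma hdB (δ x : ℝ) (hx : (0:ℝ) < 1 + x) :
    HasDerivAt (fun s : ℝ => δ/6 * ((1+s)^2)⁻¹ - δ/3 * ((1+s)^3)⁻¹ - δ/2 * (1+s)⁻¹)
      (Pf δ x) x := by
  have h1 := hasDerivAt_one_add x
  have h3 : HasDerivAt (fun s : ℝ => (1+s)^3) (3*(1+x)^2) x := by
    simpa using h1.fun_pow 3
  have h2 : HasDerivAt (fun s : ℝ => (1+s)^2) (2*(1+x)) x := by
    simpa using h1.fun_pow 2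
  have h2i := (h2.fun_inv (by positivity)).const_mul (δ/6)
  have h3i := (h3.fun_inv (by positivity)).const_mul (δ/3)
  have h1i := (h1.fun_inv (by positivity)).const_mul (δ/2)
  have := (h2i.fun_sub h3i).fun_sub h1i
  refine this.congr_deriv ?_
  unfold Pf
  field_simp
  ring

lemma total_mass (δ : ℝ) (hδ : 0 ≤ δ) : (∫ s in Set.Ioi (0:ℝ), Kf δ s) = 2*δ/3 := by
  have h1 : (∫ s in Set.Ioi (0:ℝ), Kf δ s) = ∫ s in Set.Ioi (0:ℝ), Pf δ s :=
    setIntegral_congr_fun measurableSet_Ioi (fun s hs => Kf_eq δ s hδ (le_of_lt hs))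
  rw [h1]
  have key := integral_Ioi_of_hasDerivAt_of_nonneg' (g := fun s : ℝ =>
      δ/6 * ((1+s)^2)⁻¹ - δ/3 * ((1+s)^3)⁻¹ - δ/2 * (1+s)⁻¹)
      (g' := fun s : ℝ => Pf δ s) (a := 0) (l := 0) ?_ ?_ ?_
  · rw [key]; norm_num; ring
  · intro x hx
    have hx' : (0:ℝ) < 1 + x := by have := hx.out; linarith
    exact hdB δ x hx'
  · intro x hx
    exact Pf_nonneg δ x hδ (le_of_lt hx.out)
  · have t2 := (tendsto_inv_pow_one_add 2 (by norm_num)).const_mul (δ/6)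
    have t3 := (tendsto_inv_pow_one_add 3 (by norm_num)).const_mul (δ/3)
    have t1 := (tendsto_inv_pow_one_add 1 (by norm_num)).const_mul (δ/2)
    simp only [pow_one] at t1
    simpa using (t2.sub t3).sub t1

lemma Pf_continuousAt (δ u : ℝ) (h : (0:ℝ) < 1 + u) : ContinuousAt (Pf δ) u := by
  unfold Pf
  apply ContinuousAt.mul continuousAt_const
  apply ContinuousAt.sub
  · apply ContinuousAt.add
    · exact ContinuousAt.div continuousAt_const (by fun_prop) (by positivity)
    · exact ContinuousAt.div continuousAt_const (by fun_prop) (by positivity)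
  · exact ContinuousAt.div continuousAt_const (by fun_prop) (by positivity)

theorem stmt15 :
    ∃ δ : ℝ, 0 < δ ∧
      (∀ t s' : ℝ, 0 ≤ t → t ≤ s' →
        (∫ s in t..s', Kf δ (s - t) * Kf δ (s' - s)) ≤ Kf δ (s' - t)) ∧
      (∫ s in Set.Ioi (0 : ℝ), Kf δ s) ≤ 1 := by
  refine ⟨1/108, by norm_num, ?_, ?_⟩
  · intro t s' ht hts
    set δ : ℝ := 1/108 with hδdef
    have hδ : (0:ℝ) ≤ δ := by norm_num [hδdef]
    have hT : (0:ℝ) ≤ s' - t := by linarith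
    rw [Kf_eq δ (s'-t) hδ hT]
    have hEq : Set.EqOn (fun s => Kf δ (s-t) * Kf δ (s'-s))
        (fun s => Pf δ (s-t) * Pf δ (s'-s)) (Set.uIcc t s') := by
      intro s hs
      rw [Set.uIcc_of_le hts] at hs
      simp only
      rw [Kf_eq δ (s-t) hδ (by linarith [hs.1]), Kf_eq δ (s'-s) hδ (by linarith [hs.2])]
    rw [intervalIntegral.integral_congr hEq]
    have hInt1 : IntervalIntegrable (fun s => 1/(1+s-t)^2) volume t s' := by
      apply ContinuousOn.intervalIntegrable
      intro x hx
      rw [Set.uIcc_of_le hts] at hx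
      have hx0 : (0:ℝ) < 1 + x - t := by have := hx.1; linarith
      apply ContinuousAt.continuousWithinAt
      exact ContinuousAt.div continuousAt_const (by fun_prop) (by positivity)
    have hInt2 : IntervalIntegrable (fun s => 1/(1+s'-s)^2) volume t s' := by
      apply ContinuousOn.intervalIntegrable
      intro x hx
      rw [Set.uIcc_of_le hts] at hx
      have hx0 : (0:ℝ) < 1 + s' - x := by have := hx.2; linarith
      apply ContinuousAt.continuousWithinAt
      exact ContinuousAt.div continuousAt_const (by fun_prop) (by positivity)
    have hIntg : IntervalIntegrable
        (fun s => 9*δ^2/(1+s'-t)^2 * (1/(1+s-t)^2 + 1/(1+s'-s)^2)) volume t s' :=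
      (hInt1.add hInt2).const_mul _
    have hIntf : IntervalIntegrable (fun s => Pf δ (s-t) * Pf δ (s'-s)) volume t s' := by
      apply ContinuousOn.intervalIntegrable
      intro x hx
      rw [Set.uIcc_of_le hts] at hx
      apply ContinuousAt.continuousWithinAt
      apply ContinuousAt.mul
      · have hcomp : ContinuousAt (fun s : ℝ => s - t) x := by fun_prop
        have : ContinuousAt (Pf δ ∘ (fun s : ℝ => s - t)) x :=
          ContinuousAt.comp (Pf_continuousAt δ (x-t) (by linarith [hx.1])) hcomp
        exact this
      · have hcomp : ContinuousAt (fun s : ℝ => s' - s) x := by fun_prop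
        have : ContinuousAt (Pf δ ∘ (fun s : ℝ => s' - s)) x :=
          ContinuousAt.comp (Pf_continuousAt δ (s'-x) (by linarith [hx.2])) hcomp
        exact this
    have hpb : ∀ s ∈ Set.Icc t s', Pf δ (s-t) * Pf δ (s'-s)
        ≤ 9*δ^2/(1+s'-t)^2 * (1/(1+s-t)^2 + 1/(1+s'-s)^2) := by
      intro s hs
      have h := pointwise δ (s-t) (s'-s) hδ (by linarith [hs.1]) (by linarith [hs.2])
      have e1 : 1+(s-t)+(s'-s) = 1+s'-t := by ring
      have e2 : 1+(s-t) = 1+s-t := by ring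
      have e3 : 1+(s'-s) = 1+s'-s := by ring
      rw [e1, e2, e3] at h
      exact h
    have hmono := intervalIntegral.integral_mono_on hts hIntf hIntg hpb
    have hval : (∫ s in t..s', 9*δ^2/(1+s'-t)^2 * (1/(1+s-t)^2 + 1/(1+s'-s)^2))
        = 9*δ^2/(1+s'-t)^2 * ((1 - 1/(1+s'-t)) + (1 - 1/(1+s'-t))) := by
      rw [intervalIntegral.integral_const_mul, intervalIntegral.integral_add hInt1 hInt2,
        intA t s' hts, intB t s' hts]
    rw [hval] at hmono
    have h1 : (0:ℝ) < 1+s'-t := by linarith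
    have h2 : (0:ℝ) ≤ 1/(1+s'-t) := by positivity
    have hb : ((1 - 1/(1+s'-t)) + (1 - 1/(1+s'-t))) ≤ 2 := by linarith
    have hs1 : 9*δ^2/(1+s'-t)^2 * ((1 - 1/(1+s'-t)) + (1 - 1/(1+s'-t)))
        ≤ 9*δ^2/(1+s'-t)^2 * 2 := by
      apply mul_le_mul_of_nonneg_left hb (by positivity)
    have hs2 : 9*δ^2/(1+s'-t)^2 * 2 = (δ/6)/(1+s'-t)^2 := by
      rw [hδdef]; field_simp; ring
    have hs3 : (δ/6)/(1+s'-t)^2 ≤ Pf δ (s'-t) := by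
      have := Pf_lower δ (s'-t) hδ hT
      have e : (1:ℝ)+(s'-t) = 1+s'-t := by ring
      rwa [e] at this
    linarith
  · rw [total_mass (1/108) (by norm_num)]
    norm_num
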